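/- Let P_i, P_j be symmetric n×n matrices, C ∈ R^{m×n}, and H ∈ R^{k×m}. Then there exists a matrix Γ ∈ R^{k×n} such that P_i - P_j + (HC)ᵀ Γ + Γᵀ (HC) = 0 if and only if xᵀ (P_i - P_j) x = 0 for all x with HCx = 0. -/

import Mathlib

open Matrix

/-- Factorization: if `ker f ≤ ker g` then `g` factors through `f`. -/
lemma exists_factor {V W : Type*} [AddCommGroup V] [Module ℝ V] [AddCommGroup W] [Module ℝ W]
    (f : V →ₗ[ℝ] W) (g : V →ₗ[ℝ] V) (h : LinearMap.ker f ≤ LinearMap.ker g) :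
    ∃ M : W →ₗ[ℝ] V, M ∘ₗ f = g := by
  obtain ⟨c, hc⟩ := Submodule.exists_isCompl (LinearMap.range f)
  refine ⟨((LinearMap.ker f).liftQ g h) ∘ₗ f.quotKerEquivRange.symm.toLinearMap ∘ₗ
    ((LinearMap.range f).linearProjOfIsCompl c hc), ?_⟩
  ext x
  have h1 : (LinearMap.range f).linearProjOfIsCompl c hc (f x)
      = ⟨f x, LinearMap.mem_range_self f x⟩ :=
    Submodule.linearProjOfIsCompl_apply_left hc ⟨f x, LinearMap.mem_range_self f x⟩
  simp only [LinearMap.coe_comp, Function.comp_apply, LinearEquiv.coe_coe, h1]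
  rw [LinearMap.quotKerEquivRange_symm_apply_image]
  simp

theorem stmt_6 (n m k : ℕ) (Pi Pj : Matrix (Fin n) (Fin n) ℝ)
    (hPi : Pi.IsSymm) (hPj : Pj.IsSymm)
    (C : Matrix (Fin m) (Fin n) ℝ) (H : Matrix (Fin k) (Fin m) ℝ) :
    (∃ Γ : Matrix (Fin k) (Fin n) ℝ,
        Pi - Pj + (H * C)ᵀ * Γ + Γᵀ * (H * C) = 0) ↔
      (∀ x : Fin n → ℝ, (H * C).mulVec x = 0 →
        x ⬝ᵥ (Pi - Pj).mulVec x = 0) := by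
  set U : Matrix (Fin k) (Fin n) ℝ := H * C with hU
  set Q : Matrix (Fin n) (Fin n) ℝ := Pi - Pj with hQdef
  have hQ : Qᵀ = Q := by
    rw [hQdef, Matrix.transpose_sub, hPi, hPj]
  clear_value U Q
  constructor
  · rintro ⟨Γ, hΓ⟩ x hx
    have h0 : Q = -(Uᵀ * Γ) - Γᵀ * U := by
      linear_combination (norm := abel) hΓ
    rw [h0]
    have h1 : x ⬝ᵥ (Uᵀ * Γ).mulVec x = (U.mulVec x) ⬝ᵥ (Γ.mulVec x) := by
      rw [← Matrix.mulVec_mulVec, Matrix.dotProduct_mulVec, Matrix.vecMul_transpose]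
    have h2 : x ⬝ᵥ (Γᵀ * U).mulVec x = (Γ.mulVec x) ⬝ᵥ (U.mulVec x) := by
      rw [← Matrix.mulVec_mulVec, Matrix.dotProduct_mulVec, Matrix.vecMul_transpose]
    rw [Matrix.sub_mulVec, Matrix.neg_mulVec, dotProduct_sub, dotProduct_neg,
      h1, h2, hx]
    simp
  · intro hker
    -- bilinear version on the kernel
    have hbil : ∀ x y : Fin n → ℝ, U.mulVec x = 0 → U.mulVec y = 0 →
        x ⬝ᵥ Q.mulVec y = 0 := by
      intro x y hx hy
      have hxy : U.mulVec (x + y) = 0 := by rw [Matrix.mulVec_add, hx, hy, add_zero]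
      have h1 := hker x hx
      have h2 := hker y hy
      have h3 := hker (x + y) hxy
      have hsym : y ⬝ᵥ Q.mulVec x = x ⬝ᵥ Q.mulVec y :=
        calc y ⬝ᵥ Q.mulVec x = (Q.mulVec x) ⬝ᵥ y := dotProduct_comm _ _
          _ = (Matrix.vecMul x Qᵀ) ⬝ᵥ y := by rw [Matrix.vecMul_transpose]
          _ = (Matrix.vecMul x Q) ⬝ᵥ y := by rw [hQ]
          _ = x ⬝ᵥ Q.mulVec y := (Matrix.dotProduct_mulVec x Q y).symm
      rw [Matrix.mulVec_add, dotProduct_add, add_dotProduct,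
        add_dotProduct, h1] at h3
      rw [hsym] at h3
      linarith [h2, h3]
    -- set up the projection
    classical
    set u : (Fin n → ℝ) →ₗ[ℝ] (Fin k → ℝ) := Matrix.toLin' U with hu
    obtain ⟨c, hc⟩ := Submodule.exists_isCompl (LinearMap.ker u)
    set Ls : (Fin n → ℝ) →ₗ[ℝ] (Fin n → ℝ) :=
      c.subtype ∘ₗ (c.linearProjOfIsCompl (LinearMap.ker u) hc.symm) with hLs
    have hLsker : ∀ x, x - Ls x ∈ LinearMap.ker u := by
      intro x
      have h2 : ((LinearMap.ker u).linearProjOfIsCompl c hc x : Fin n → ℝ) = x - Ls x :=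
        eq_sub_of_add_eq
          (by simpa [hLs, Submodule.linearProjOfIsCompl] using Submodule.projection_add_projection_eq_self hc x)
      rw [← h2]
      exact ((LinearMap.ker u).linearProjOfIsCompl c hc x).2
    have hkerLs : LinearMap.ker u ≤ LinearMap.ker Ls := by
      intro x hx
      simp only [hLs, LinearMap.mem_ker, LinearMap.coe_comp, Function.comp_apply,
        Submodule.coe_subtype]
      rw [Submodule.linearProjOfIsCompl, Submodule.linearProjOfIsCompl_apply_right' hc.symm hx]
      rfl
    obtain ⟨Ms, hMs⟩ := exists_factor u Ls hkerLs
    set S : Matrix (Fin n) (Fin n) ℝ := LinearMap.toMatrix' Ls with hS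
    set M : Matrix (Fin n) (Fin k) ℝ := LinearMap.toMatrix' Ms with hM
    have hMU : M * U = S := by
      rw [hM, hS, ← hMs, LinearMap.toMatrix'_comp, hu, LinearMap.toMatrix'_toLin']
    have hSmul : ∀ x, S.mulVec x = Ls x := by
      intro x
      rw [hS, ← Matrix.toLin'_apply, Matrix.toLin'_toMatrix']
    clear_value S M
    -- T := 1 - S has range in ker u, hence Tᵀ Q T = 0
    have hTcol : ∀ (i : Fin n), (1 - S)ᵀ i
        = (_root_.Pi.single i 1) - Ls (_root_.Pi.single i 1) := by
      intro i
      change (1 - S).col i = _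
      rw [← Matrix.mulVec_single_one, Matrix.sub_mulVec, Matrix.one_mulVec, hSmul]
    have hz : ∀ (i : Fin n), U.mulVec ((1 - S)ᵀ i) = 0 := by
      intro i
      rw [hTcol]
      have h3 := hLsker (_root_.Pi.single i 1)
      simp only [LinearMap.mem_ker, hu, Matrix.toLin'_apply] at h3
      exact h3
    have hT : (1 - S)ᵀ * Q * (1 - S) = 0 := by
      ext i j
      have hentry : (((1 - S)ᵀ * Q * (1 - S) : Matrix (Fin n) (Fin n) ℝ)) i j
          = ((1 - S)ᵀ i) ⬝ᵥ Q.mulVec ((1 - S)ᵀ j) := by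
        simp only [Matrix.mul_apply, Matrix.transpose_apply, dotProduct,
          Matrix.mulVec, Finset.mul_sum, Finset.sum_mul]
        rw [Finset.sum_comm]
        refine Finset.sum_congr rfl fun l _ => Finset.sum_congr rfl fun p _ => by ring
      rw [hentry, hbil _ _ (hz i) (hz j)]
      rfl
    -- the explicit Γ
    set A : Matrix (Fin n) (Fin n) ℝ := (2⁻¹ : ℝ) • (Q * S) + Q * (1 - S) with hA
    refine ⟨-(Mᵀ * A), ?_⟩
    have hexp : Q - Q * S - Sᵀ * Q + Sᵀ * (Q * S) = 0 := by
      have h4 := hT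
      rw [Matrix.transpose_sub, Matrix.transpose_one, Matrix.sub_mul, Matrix.one_mul,
        Matrix.mul_sub, Matrix.mul_one, Matrix.sub_mul, Matrix.mul_assoc] at h4
      calc Q - Q * S - Sᵀ * Q + Sᵀ * (Q * S)
          = Q - Sᵀ * Q - (Q * S - Sᵀ * (Q * S)) := by abel
        _ = 0 := h4
    have hAt : Aᵀ = (2⁻¹ : ℝ) • (Sᵀ * Q) + (1 - S)ᵀ * Q := by
      rw [hA, Matrix.transpose_add, Matrix.transpose_smul, Matrix.transpose_mul,
        Matrix.transpose_mul, hQ]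
    have e1 : Sᵀ * (Q * (1 - S)) = Sᵀ * Q - Sᵀ * (Q * S) := by
      rw [Matrix.mul_sub Q, Matrix.mul_one, Matrix.mul_sub Sᵀ]
    have e2 : (1 - S)ᵀ * Q * S = Q * S - Sᵀ * (Q * S) := by
      rw [Matrix.transpose_sub, Matrix.transpose_one, Matrix.sub_mul, Matrix.one_mul,
        Matrix.sub_mul, Matrix.mul_assoc]
    have e3 : (2⁻¹ : ℝ) • (Sᵀ * (Q * S)) + (2⁻¹ : ℝ) • (Sᵀ * Q * S) = Sᵀ * (Q * S) := by
      rw [Matrix.mul_assoc, ← add_smul]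
      norm_num
    have key : Sᵀ * A + Aᵀ * S = Q := by
      calc Sᵀ * A + Aᵀ * S
          = ((2⁻¹ : ℝ) • (Sᵀ * (Q * S)) + (Sᵀ * Q - Sᵀ * (Q * S)))
            + ((2⁻¹ : ℝ) • (Sᵀ * Q * S) + (Q * S - Sᵀ * (Q * S))) := by
            rw [hA, hAt, Matrix.mul_add, Matrix.add_mul, Matrix.mul_smul, Matrix.smul_mul,
              e1, e2]
        _ = ((2⁻¹ : ℝ) • (Sᵀ * (Q * S)) + (2⁻¹ : ℝ) • (Sᵀ * Q * S))
            + ((Sᵀ * Q - Sᵀ * (Q * S)) + (Q * S - Sᵀ * (Q * S))) := by abel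
        _ = Sᵀ * (Q * S) + ((Sᵀ * Q - Sᵀ * (Q * S)) + (Q * S - Sᵀ * (Q * S))) := by rw [e3]
        _ = Q := by
            refine eq_of_sub_eq_zero ?_
            calc Sᵀ * (Q * S) + ((Sᵀ * Q - Sᵀ * (Q * S)) + (Q * S - Sᵀ * (Q * S))) - Q
                = -(Q - Q * S - Sᵀ * Q + Sᵀ * (Q * S)) := by abel
              _ = 0 := by rw [hexp, neg_zero]
    have h1 : Uᵀ * -(Mᵀ * A) = -(Sᵀ * A) := by
      rw [Matrix.mul_neg, ← Matrix.mul_assoc, ← Matrix.transpose_mul, hMU]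
    have h2 : (-(Mᵀ * A))ᵀ * U = -(Aᵀ * S) := by
      rw [Matrix.transpose_neg, Matrix.transpose_mul, Matrix.transpose_transpose,
        Matrix.neg_mul, Matrix.mul_assoc, hMU]
    rw [h1, h2]
    calc Q + -(Sᵀ * A) + -(Aᵀ * S) = Q - (Sᵀ * A + Aᵀ * S) := by abel
      _ = Q - Q := by rw [key]
      _ = 0 := sub_self Q
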